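/- Let f : ℝ^n → ℝ^n be continuous and suppose there exists M > 0 such that f(x)·x > 0 whenever |x| ≥ M (Nagumo condition). If x : ℝ → ℝ^n is a twice continuously differentiable periodic solution of ẍ = f(x), then |x(t)| < M for all t. (Hint/outline: at a maximum t₀ of g(t) = |x(t)|²/2, one has g''(t₀) ≤ 0; but g''(t₀) = |ẋ(t₀)|² + x(t₀)·ẍ(t₀) = |ẋ(t₀)|² + f(x(t₀))·x(t₀) > 0 if |x(t₀)| ≥ M, a contradiction.) -/

import Mathlib

open Real

/-- A-priori bound from the Nagumo condition: if `f` is continuous and `⟪f x, x⟫ > 0`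
whenever `‖x‖ ≥ M`, then any `C²` periodic solution of `ẍ = f(x)` satisfies
`‖x(t)‖ < M` for all `t`. -/
theorem apriori_bound_nagumo
    (n : ℕ) (f : EuclideanSpace ℝ (Fin n) → EuclideanSpace ℝ (Fin n))
    (hf : Continuous f) (M : ℝ) (hM : 0 < M)
    (hNagumo : ∀ y : EuclideanSpace ℝ (Fin n), M ≤ ‖y‖ → 0 < inner (𝕜 := ℝ) (f y) y)
    (x : ℝ → EuclideanSpace ℝ (Fin n)) (hx : ContDiff ℝ 2 x)
    (p : ℝ) (hp : 0 < p) (hper : Function.Periodic x p)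
    (hode : ∀ t, deriv (deriv x) t = f (x t)) :
    ∀ t : ℝ, ‖x t‖ < M := by
  -- basic differentiability facts
  have h2 : (2 : WithTop ℕ∞) = 1 + 1 := by norm_num
  have hx' := (contDiff_succ_iff_deriv.mp (h2 ▸ hx))
  have hxdiff : Differentiable ℝ x := hx'.1
  have hx'' : ContDiff ℝ 1 (deriv x) := hx'.2.2
  have hx'diff : Differentiable ℝ (deriv x) := hx''.differentiable one_ne_zero
  -- h t = ⟪x'(t), x(t)⟫, half of g'
  set h : ℝ → ℝ := fun t => inner (𝕜 := ℝ) (deriv x t) (x t) with hh_def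
  set g : ℝ → ℝ := fun t => inner (𝕜 := ℝ) (x t) (x t) with hg_def
  have hg : ∀ t, HasDerivAt g (2 * h t) t := by
    intro t
    have := ((hxdiff t).hasDerivAt).inner ℝ ((hxdiff t).hasDerivAt)
    convert this using 1
    show 2 * inner (𝕜 := ℝ) (deriv x t) (x t) = _
    rw [real_inner_comm (x t) (deriv x t)]
    ring
    all_goals rfl
  have hh : ∀ t, HasDerivAt h
      (inner (𝕜 := ℝ) (f (x t)) (x t) + ‖deriv x t‖ ^ 2) t := by
    intro t
    have := ((hx'diff t).hasDerivAt).inner ℝ ((hxdiff t).hasDerivAt)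
    rw [hode t] at this
    rw [real_inner_self_eq_norm_sq] at this
    rw [add_comm]
    exact this
  -- g is periodic and continuous, attains max on [0, p]
  have hgper : Function.Periodic g p := fun t => by simp [hg_def, hper t]
  have hgcont : Continuous g := hxdiff.continuous.inner hxdiff.continuous
  obtain ⟨t₀, ht₀mem, ht₀max⟩ :=
    (isCompact_Icc (a := (0:ℝ)) (b := p)).exists_isMaxOn (by
      exact Set.nonempty_Icc.mpr hp.le) (hgcont.continuousOn)
  -- global max
  have hglobal : ∀ t, g t ≤ g t₀ := by
    intro t
    obtain ⟨s, hs, hst⟩ := hgper.exists_mem_Ico₀ hp t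
    rw [hst]
    exact ht₀max ⟨hs.1, hs.2.le⟩
  -- It suffices to show ‖x t₀‖ < M
  have key : ‖x t₀‖ < M := by
    by_contra hge
    push_neg at hge
    have hpos : 0 < inner (𝕜 := ℝ) (f (x t₀)) (x t₀) + ‖deriv x t₀‖ ^ 2 := by
      have := hNagumo (x t₀) hge
      positivity
    -- g has a local max at t₀, so g'(t₀) = 0, i.e. h t₀ = 0
    have hmax : IsLocalMax g t₀ := Filter.Eventually.of_forall hglobal
    have hht₀ : h t₀ = 0 := by
      have := hmax.hasDerivAt_eq_zero (hg t₀); linarith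
    -- since h'(t₀) > 0 and h t₀ = 0, h is positive on a right neighborhood
    have hslope := hasDerivAt_iff_tendsto_slope.mp (hh t₀)
    have hev : ∀ᶠ t in nhdsWithin t₀ (Set.Ioi t₀), 0 < h t := by
      have h1 : ∀ᶠ t in nhdsWithin t₀ {t₀}ᶜ, 0 < slope h t₀ t :=
        hslope.eventually (lt_mem_nhds hpos)
      have h2 : ∀ᶠ t in nhdsWithin t₀ (Set.Ioi t₀), 0 < slope h t₀ t :=
        h1.filter_mono (nhdsWithin_mono (s := Set.Ioi t₀) (t := {t₀}ᶜ) t₀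
          (fun y hy => Set.mem_compl_singleton_iff.mpr (ne_of_gt hy)))
      filter_upwards [h2, self_mem_nhdsWithin] with t hslt (htmem : t ∈ Set.Ioi t₀)
      have : slope h t₀ t = h t / (t - t₀) := by
        simp only [slope, hht₀, vsub_eq_sub, smul_eq_mul, sub_zero]
        rw [div_eq_inv_mul]
      rw [this] at hslt
      have hlt : (0:ℝ) < t - t₀ := sub_pos.mpr htmem
      have := mul_pos hslt hlt
      rwa [div_mul_cancel₀ _ (ne_of_gt hlt)] at this
    obtain ⟨u, hu, hIoo⟩ := mem_nhdsGT_iff_exists_Ioo_subset.mp hev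
    have hu' : t₀ < u := hu
    -- g is strictly monotone on [t₀, u], contradicting that t₀ is a global max
    have hmono : StrictMonoOn g (Set.Icc t₀ u) := by
      apply strictMonoOn_of_deriv_pos (convex_Icc t₀ u) hgcont.continuousOn
      intro s hs
      rw [interior_Icc] at hs
      rw [(hg s).deriv]
      have : 0 < h s := hIoo hs
      linarith
    set m := (t₀ + u) / 2
    have hm : m ∈ Set.Ioo t₀ u := ⟨by simp [m]; linarith, by simp [m]; linarith⟩
    have : g t₀ < g m :=
      hmono ⟨le_refl _, hu'.le⟩ ⟨hm.1.le, hm.2.le⟩ hm.1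
    exact absurd (hglobal m) (not_le.mpr this)
  intro t
  have : g t ≤ g t₀ := hglobal t
  have hnorm : ‖x t‖ ^ 2 ≤ ‖x t₀‖ ^ 2 := by
    simpa only [hg_def, real_inner_self_eq_norm_sq] using this
  calc ‖x t‖ ≤ ‖x t₀‖ := by nlinarith [norm_nonneg (x t), norm_nonneg (x t₀)]
    _ < M := key
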